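/- Let A be a finite set, P a probability mass function on A with full support, and define the concentration exponent R_C(D) = inf_{W: W_X=P, E_W ρ ≤ D} {H(W‖W_X×W_Y) + E_{W_Y}[log P(Y)]}, where ρ is a distortion function on A×A. Then for any sequence of sets C_n ⊆ A^n, if P^n([C_n]_D) → 1, where [C_n]_D = {x ∈ A^n : min_{y∈C_n} ρ_n(x,y) ≤ D}, then liminf_{n→∞} (1/n) log P^n(C_n) ≥ R_C(D). -/

import Mathlib

open scoped BigOperators Classical
set_option linter.unusedSectionVars false
set_option maxHeartbeats 1000000

/-- `W` is a feasible coupling: a pmf on `A × A` with first marginal `P` and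
expected distortion at most `D`. -/
def Feasible {A : Type*} [Fintype A] (P : A → ℝ) (ρ : A → A → ℝ) (D : ℝ)
    (W : A × A → ℝ) : Prop :=
  (∀ p, 0 ≤ W p) ∧ (∑ p, W p) = 1 ∧ (∀ x, (∑ y, W (x, y)) = P x) ∧
    (∑ p : A × A, W p * ρ p.1 p.2) ≤ D

/-- The objective `H(W ‖ W_X × W_Y) + E_{W_Y}[log M(Y)]`. -/
noncomputable def obj {A : Type*} [Fintype A] (M : A → ℝ) (W : A × A → ℝ) : ℝ :=
  (∑ p : A × A, W p * Real.log (W p / ((∑ y, W (p.1, y)) * (∑ x, W (x, p.2)))))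
    + ∑ y, (∑ x, W (x, y)) * Real.log (M y)

/-- The rate function `R(D) = inf { H(W‖W_X×W_Y) + E_{W_Y}[log M] : W_X = P, E_W ρ ≤ D }`. -/
noncomputable def massRate {A : Type*} [Fintype A] (P : A → ℝ) (ρ : A → A → ℝ)
    (M : A → ℝ) (D : ℝ) : ℝ :=
  sInf (obj M '' {W | Feasible P ρ D W})

section Aux
variable {A : Type*} [Fintype A]

noncomputable def Pn {n : ℕ} (P : A → ℝ) (x : Fin n → A) : ℝ := ∏ i, P (x i)

noncomputable def Wbar (n : ℕ) (P : A → ℝ) (φ : (Fin n → A) → (Fin n → A))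
    (p : A × A) : ℝ :=
  (1 / (n : ℝ)) * ∑ x : Fin n → A, Pn P x * ∑ i, (if (x i, φ x i) = p then (1:ℝ) else 0)

variable {P : A → ℝ} {n : ℕ} {φ : (Fin n → A) → (Fin n → A)}

lemma sum_Pn (hP1 : ∑ a, P a = 1) : ∑ x : Fin n → A, Pn P x = 1 := by
  have := Finset.prod_univ_sum (fun _ : Fin n => (Finset.univ : Finset A))
    (fun _ a => P a)
  simp only [hP1, Finset.prod_const_one, Fintype.piFinset_univ] at this
  simpa [Pn] using this.symm

lemma Pn_nonneg (hP : ∀ a, 0 < P a) (x : Fin n → A) : 0 ≤ Pn P x :=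
  Finset.prod_nonneg fun i _ => (hP (x i)).le

lemma Pn_pos (hP : ∀ a, 0 < P a) (x : Fin n → A) : 0 < Pn P x :=
  Finset.prod_pos fun i _ => hP (x i)

/-- key exchange lemma -/
lemma sum_Wbar_mul (f : A × A → ℝ) :
    ∑ p : A × A, Wbar n P φ p * f p
      = (1 / (n : ℝ)) * ∑ x : Fin n → A, Pn P x * ∑ i, f (x i, φ x i) := by
  simp only [Wbar, mul_assoc, ← Finset.mul_sum]
  congr 1
  calc ∑ p : A × A, (∑ x : Fin n → A, Pn P x * ∑ i, (if (x i, φ x i) = p then (1:ℝ) else 0)) * f p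
      = ∑ p : A × A, ∑ x : Fin n → A, Pn P x * ∑ i, (if (x i, φ x i) = p then f p else 0) := by
        refine Finset.sum_congr rfl fun p _ => ?_
        rw [Finset.sum_mul]
        refine Finset.sum_congr rfl fun x _ => ?_
        rw [mul_assoc, Finset.sum_mul]
        simp [ite_mul]
    _ = ∑ x : Fin n → A, ∑ p : A × A, Pn P x * ∑ i, (if (x i, φ x i) = p then f p else 0) :=
        Finset.sum_comm
    _ = ∑ x : Fin n → A, Pn P x * ∑ i, f (x i, φ x i) := by
        refine Finset.sum_congr rfl fun x _ => ?_
        rw [← Finset.mul_sum]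
        congr 1
        rw [Finset.sum_comm]
        refine Finset.sum_congr rfl fun i _ => ?_
        simpa using Finset.sum_ite_eq Finset.univ (x i, φ x i) f

lemma Wbar_nonneg (hP : ∀ a, 0 < P a) (p : A × A) : 0 ≤ Wbar n P φ p := by
  apply mul_nonneg (by positivity)
  refine Finset.sum_nonneg fun x _ => mul_nonneg (Pn_nonneg hP x) ?_
  exact Finset.sum_nonneg fun i _ => by positivity

lemma Wbar_ge (hP : ∀ a, 0 < P a) (x : Fin n → A) (i : Fin n) :
    (1 / (n : ℝ)) * Pn P x ≤ Wbar n P φ (x i, φ x i) := by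
  unfold Wbar
  have hn : (0:ℝ) ≤ 1 / (n:ℝ) := by positivity
  apply mul_le_mul_of_nonneg_left _ hn
  have h1 : (1:ℝ) ≤ ∑ j, (if (x j, φ x j) = (x i, φ x i) then (1:ℝ) else 0) := by
    simpa using Finset.single_le_sum
      (f := fun j => if (x j, φ x j) = (x i, φ x i) then (1:ℝ) else 0)
      (fun j _ => by positivity) (Finset.mem_univ i)
  calc Pn P x = Pn P x * 1 := (mul_one _).symm
    _ ≤ Pn P x * ∑ j, (if (x j, φ x j) = (x i, φ x i) then (1:ℝ) else 0) :=
        mul_le_mul_of_nonneg_left h1 (Pn_nonneg hP x)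
    _ ≤ ∑ x' : Fin n → A, Pn P x' * ∑ j, (if (x' j, φ x' j) = (x i, φ x i) then (1:ℝ) else 0) :=
        Finset.single_le_sum
          (f := fun x' => Pn P x' * ∑ j, (if (x' j, φ x' j) = (x i, φ x i) then (1:ℝ) else 0))
          (fun x' _ => mul_nonneg (Pn_nonneg hP x')
            (Finset.sum_nonneg fun j _ => by positivity)) (Finset.mem_univ x)

lemma Wbar_pos (hP : ∀ a, 0 < P a) (hn : 0 < n) (x : Fin n → A) (i : Fin n) :
    0 < Wbar n P φ (x i, φ x i) := by
  refine lt_of_lt_of_le ?_ (Wbar_ge hP x i)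
  have h1 := Pn_pos hP x
  have h2 : (0:ℝ) < (n:ℝ) := by exact_mod_cast hn
  positivity

/-- single-coordinate marginal computation -/
lemma sum_Pn_single (hP1 : ∑ a, P a = 1) (i : Fin n) (g : A → ℝ) :
    ∑ x : Fin n → A, Pn P x * g (x i) = ∑ a, P a * g a := by
  have key := Finset.prod_univ_sum (fun _ : Fin n => (Finset.univ : Finset A))
    (fun j a => P a * (if j = i then g a else 1))
  simp only [Fintype.piFinset_univ] at key
  have lhs : ∏ j : Fin n, ∑ a, P a * (if j = i then g a else 1) = ∑ a, P a * g a := by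
    have h : ∀ j : Fin n, (∑ a, P a * (if j = i then g a else 1))
        = if j = i then (∑ a, P a * g a) else 1 := by
      intro j
      by_cases h : j = i <;> simp [h, hP1]
    rw [Finset.prod_congr rfl fun j _ => h j, Finset.prod_ite_eq' Finset.univ i
      (fun _ => ∑ a, P a * g a)]
    simp
  have rhs : ∀ x : Fin n → A, (∏ j : Fin n, P (x j) * (if j = i then g (x j) else 1))
      = Pn P x * g (x i) := by
    intro x
    rw [Finset.prod_mul_distrib]
    congr 1
    rw [Finset.prod_ite_eq' Finset.univ i (fun j => g (x j))]
    simp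
  rw [← lhs, key]
  exact Finset.sum_congr rfl fun x _ => (rhs x).symm

lemma Wbar_margX (hP : ∀ a, 0 < P a) (hP1 : ∑ a, P a = 1) (hn : 0 < n) (a : A) :
    ∑ b, Wbar n P φ (a, b) = P a := by
  have hn' : ((n:ℝ)) ≠ 0 := Nat.cast_ne_zero.2 hn.ne'
  simp only [Wbar, ← Finset.mul_sum]
  rw [Finset.sum_comm]
  have h1 : ∀ x : Fin n → A,
      ∑ b, (Pn P x * ∑ i, (if (x i, φ x i) = (a, b) then (1:ℝ) else 0))
      = Pn P x * ∑ i, (if x i = a then (1:ℝ) else 0) := by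
    intro x
    rw [← Finset.mul_sum]
    congr 1
    rw [Finset.sum_comm]
    refine Finset.sum_congr rfl fun i _ => ?_
    by_cases h : x i = a
    · simp [Prod.ext_iff, h, Finset.sum_ite_eq Finset.univ (φ x i) (fun _ => (1:ℝ))]
    · simp [Prod.ext_iff, h]
  rw [Finset.sum_congr rfl fun x _ => h1 x]
  have swap : ∑ x : Fin n → A, Pn P x * ∑ i, (if x i = a then (1:ℝ) else 0)
      = ∑ i : Fin n, ∑ x : Fin n → A, Pn P x * (if x i = a then (1:ℝ) else 0) := by
    rw [Finset.sum_comm]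
    exact Finset.sum_congr rfl fun x _ => Finset.mul_sum _ _ _
  rw [swap]
  have h2 : ∀ i : Fin n, ∑ x : Fin n → A, Pn P x * (if x i = a then (1:ℝ) else 0) = P a := by
    intro i
    rw [sum_Pn_single hP1 i (fun c => if c = a then (1:ℝ) else 0)]
    rw [Finset.sum_eq_single a] <;> simp +contextual
  rw [Finset.sum_congr rfl fun i _ => h2 i]
  rw [Finset.sum_const, Finset.card_univ, Fintype.card_fin, nsmul_eq_mul]
  field_simp

lemma Wbar_sum (hP : ∀ a, 0 < P a) (hP1 : ∑ a, P a = 1) (hn : 0 < n) :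
    ∑ p : A × A, Wbar n P φ p = 1 := by
  rw [Fintype.sum_prod_type]
  rw [Finset.sum_congr rfl fun a _ => Wbar_margX (φ := φ) hP hP1 hn a]
  exact hP1

lemma WY_ge (hP : ∀ a, 0 < P a) (a b : A) :
    Wbar n P φ (a, b) ≤ ∑ a', Wbar n P φ (a', b) :=
  Finset.single_le_sum (f := fun a' => Wbar n P φ (a', b))
    (fun a' _ => Wbar_nonneg hP _) (Finset.mem_univ a)

lemma WY_nonneg (hP : ∀ a, 0 < P a) (b : A) : 0 ≤ ∑ a', Wbar n P φ (a', b) :=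
  Finset.sum_nonneg fun a' _ => Wbar_nonneg hP _

/-- The core single-letter inequality. -/
theorem core (hA : Nonempty A) (hP : ∀ a, 0 < P a) (hP1 : ∑ a, P a = 1) (hn : 0 < n)
    (C : Finset (Fin n → A)) (hφ : ∀ x, φ x ∈ C) :
    obj P (Wbar n P φ) ≤ (1 / (n:ℝ)) * Real.log (∑ y ∈ C, ∏ i, P (y i)) := by
  set W := Wbar n P φ with hW
  set WY : A → ℝ := fun b => ∑ a, W (a, b) with hWY
  -- the per-pair log-factor
  set lf : A × A → ℝ := fun p => Real.log (W p * P p.2 / (P p.1 * WY p.2)) with hlf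
  set q : (Fin n → A) → ℝ :=
    fun x => ∏ i, (W (x i, φ x i) * P (φ x i) / (P (x i) * WY (φ x i))) with hq
  have hWpos : ∀ (x : Fin n → A) (i : Fin n), 0 < W (x i, φ x i) :=
    fun x i => Wbar_pos hP hn x i
  have hWYpos : ∀ (x : Fin n → A) (i : Fin n), 0 < WY (φ x i) :=
    fun x i => lt_of_lt_of_le (hWpos x i) (WY_ge hP _ _)
  have hfac_pos : ∀ (x : Fin n → A) (i : Fin n),
      0 < W (x i, φ x i) * P (φ x i) / (P (x i) * WY (φ x i)) := by
    intro x i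
    have h1 := hWpos x i; have h2 := hP (φ x i); have h3 := hP (x i); have h4 := hWYpos x i
    positivity
  have hq_pos : ∀ x, 0 < q x := fun x => Finset.prod_pos fun i _ => hfac_pos x i
  -- Step A : obj P W = ∑ p, W p * lf p
  have stepA : obj P W = ∑ p : A × A, W p * lf p := by
    rw [obj]
    have h2 : ∑ y, (∑ x, W (x, y)) * Real.log (P y)
        = ∑ p : A × A, W p * Real.log (P p.2) := by
      rw [Fintype.sum_prod_type_right]
      exact Finset.sum_congr rfl fun y _ => by rw [Finset.sum_mul]
    rw [h2, ← Finset.sum_add_distrib]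
    refine Finset.sum_congr rfl fun p _ => ?_
    rcases eq_or_lt_of_le (Wbar_nonneg (φ := φ) hP p) with h0 | h0
    · have hz : W p = 0 := hW ▸ h0.symm
      simp [hz]
    · have hWp : 0 < W p := hW ▸ h0
      have hmarg : (∑ y, W (p.1, y)) = P p.1 := Wbar_margX hP hP1 hn p.1
      have hWYp : 0 < WY p.2 := lt_of_lt_of_le hWp (by
        simpa using WY_ge (φ := φ) hP p.1 p.2)
      rw [hmarg, ← mul_add]
      congr 1
      rw [show (∑ x, W (x, p.2)) = WY p.2 from rfl]
      show _ = Real.log (W p * P p.2 / (P p.1 * WY p.2))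
      have e1 : W p * P p.2 / (P p.1 * WY p.2) = (W p / (P p.1 * WY p.2)) * P p.2 := by ring
      have hne : W p / (P p.1 * WY p.2) ≠ 0 := by
        have := hP p.1
        positivity
      rw [e1, Real.log_mul hne (hP p.2).ne']
  -- Step B : (n:ℝ) * obj P W = ∑ x, Pn P x * Real.log (q x)
  have hncast : (0:ℝ) < (n:ℝ) := by exact_mod_cast hn
  have stepB : (n:ℝ) * obj P W = ∑ x : Fin n → A, Pn P x * Real.log (q x) := by
    rw [stepA, sum_Wbar_mul lf]
    rw [← mul_assoc, mul_one_div, div_self hncast.ne', one_mul]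
    refine Finset.sum_congr rfl fun x _ => ?_
    congr 1
    exact (Real.log_prod fun i _ => (hfac_pos x i).ne').symm
  -- Step C : Jensen
  have stepC : ∑ x : Fin n → A, Pn P x * Real.log (q x)
      ≤ Real.log (∑ x : Fin n → A, Pn P x * q x) := by
    have := (strictConcaveOn_log_Ioi.concaveOn).le_map_sum
      (t := (Finset.univ : Finset (Fin n → A))) (w := Pn P) (p := q)
      (fun x _ => Pn_nonneg hP x) (sum_Pn hP1) (fun x _ => hq_pos x)
    simpa [smul_eq_mul] using this
  -- Step D : expectation bound
  set K : A → A → ℝ := fun a b => W (a, b) * P b / WY b with hK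
  have hK_nonneg : ∀ a b, 0 ≤ K a b := by
    intro a b
    have h1 : 0 ≤ W (a, b) := Wbar_nonneg hP (a, b)
    have h2 := (hP b).le
    have h3 : 0 ≤ WY b := WY_nonneg hP b
    exact div_nonneg (mul_nonneg h1 h2) h3
  have hsumK : ∀ b, ∑ a, K a b ≤ P b := by
    intro b
    show (∑ a, W (a, b) * P b / WY b) ≤ P b
    rw [← Finset.sum_div, ← Finset.sum_mul]
    show WY b * P b / WY b ≤ P b
    by_cases h : WY b = 0
    · simp [h, (hP b).le]
    · rw [mul_comm, mul_div_assoc, div_self h, mul_one]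
  have hPnq : ∀ x : Fin n → A, Pn P x * q x = ∏ i, K (x i) (φ x i) := by
    intro x
    show (∏ i, P (x i)) * (∏ i, W (x i, φ x i) * P (φ x i) / (P (x i) * WY (φ x i)))
        = ∏ i, K (x i) (φ x i)
    rw [← Finset.prod_mul_distrib]
    refine Finset.prod_congr rfl fun i _ => ?_
    show _ = W (x i, φ x i) * P (φ x i) / WY (φ x i)
    have hPx : P (x i) ≠ 0 := (hP (x i)).ne'
    have hWYne : WY (φ x i) ≠ 0 := (hWYpos x i).ne'
    field_simp
  have stepD : ∑ x : Fin n → A, Pn P x * q x ≤ ∑ y ∈ C, ∏ i, P (y i) := by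
    rw [Finset.sum_congr rfl fun x _ => hPnq x]
    have fib := Finset.sum_fiberwise_of_maps_to (s := (Finset.univ : Finset (Fin n → A)))
      (t := C) (g := φ) (fun x _ => hφ x) (fun x => ∏ i, K (x i) (φ x i))
    rw [← fib]
    refine Finset.sum_le_sum fun y hy => ?_
    calc ∑ x ∈ Finset.univ.filter (fun x => φ x = y), ∏ i, K (x i) (φ x i)
        = ∑ x ∈ Finset.univ.filter (fun x => φ x = y), ∏ i, K (x i) (y i) := by
          refine Finset.sum_congr rfl fun x hx => ?_
          have : φ x = y := (Finset.mem_filter.1 hx).2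
          rw [this]
      _ ≤ ∑ x : Fin n → A, ∏ i, K (x i) (y i) := by
          refine Finset.sum_le_sum_of_subset_of_nonneg (Finset.filter_subset _ _)
            fun x _ _ => Finset.prod_nonneg fun i _ => hK_nonneg _ _
      _ = ∏ i, ∑ a, K a (y i) := by
          have := Finset.prod_univ_sum (fun _ : Fin n => (Finset.univ : Finset A))
            (fun i a => K a (y i))
          simp only [Fintype.piFinset_univ] at this
          exact this.symm
      _ ≤ ∏ i, P (y i) := Finset.prod_le_prod
          (fun i _ => Finset.sum_nonneg fun a _ => hK_nonneg a (y i))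
          (fun i _ => hsumK (y i))
  -- Step E : positivity
  have stepE : 0 < ∑ x : Fin n → A, Pn P x * q x := by
    have : Nonempty (Fin n → A) := ⟨fun _ => hA.some⟩
    exact Finset.sum_pos (fun x _ => mul_pos (Pn_pos hP x) (hq_pos x)) Finset.univ_nonempty
  -- combine
  have key : (n:ℝ) * obj P W ≤ Real.log (∑ y ∈ C, ∏ i, P (y i)) :=
    stepB ▸ (le_trans stepC (Real.log_le_log stepE stepD))
  calc obj P W = (1 / (n:ℝ)) * ((n:ℝ) * obj P W) := by field_simp
    _ ≤ (1 / (n:ℝ)) * Real.log (∑ y ∈ C, ∏ i, P (y i)) := by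
        apply mul_le_mul_of_nonneg_left key (by positivity)

end Aux

section Cont
variable {A : Type*} [Fintype A]

/-- continuous version of the objective -/
noncomputable def Gfun (P : A → ℝ) (W : A × A → ℝ) : ℝ :=
  (∑ p : A × A, W p * Real.log (W p))
  - (∑ p : A × A, W p * Real.log (P p.1))
  - (∑ b, (∑ a, W (a, b)) * Real.log (∑ a, W (a, b)))
  + ∑ b, (∑ a, W (a, b)) * Real.log (P b)

variable {P : A → ℝ} {ρ : A → A → ℝ} {D : ℝ}

lemma obj_eq_Gfun (hP : ∀ a, 0 < P a) {W : A × A → ℝ} (hW0 : ∀ p, 0 ≤ W p)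
    (hmarg : ∀ a, (∑ b, W (a, b)) = P a) : obj P W = Gfun P W := by
  have h1 : ∀ p : A × A, W p * Real.log (W p / ((∑ y, W (p.1, y)) * (∑ x, W (x, p.2))))
      = W p * Real.log (W p) - W p * Real.log (P p.1)
        - W p * Real.log (∑ a, W (a, p.2)) := by
    intro p
    rcases eq_or_lt_of_le (hW0 p) with h0 | h0
    · simp [← h0]
    · have hWX : (∑ y, W (p.1, y)) = P p.1 := hmarg p.1
      have hWYpos : 0 < ∑ a, W (a, p.2) :=
        lt_of_lt_of_le h0 (Finset.single_le_sum (f := fun a => W (a, p.2))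
          (fun a _ => hW0 _) (Finset.mem_univ p.1))
      rw [hWX, Real.log_div h0.ne' (by have := hP p.1; positivity),
        Real.log_mul (hP p.1).ne' hWYpos.ne']
      ring
  have h2 : ∑ p : A × A, W p * Real.log (∑ a, W (a, p.2))
      = ∑ b, (∑ a, W (a, b)) * Real.log (∑ a, W (a, b)) := by
    rw [Fintype.sum_prod_type_right]
    exact Finset.sum_congr rfl fun b _ => by rw [Finset.sum_mul]
  have h3 : ∑ y, (∑ x, W (x, y)) * Real.log (P y)
      = ∑ b, (∑ a, W (a, b)) * Real.log (P b) := rfl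
  rw [obj, Gfun, Finset.sum_congr rfl fun p _ => h1 p, h3]
  rw [Finset.sum_sub_distrib, Finset.sum_sub_distrib, h2]

lemma continuous_Gfun : Continuous (Gfun P) := by
  have hev : ∀ p : A × A, Continuous (fun W : A × A → ℝ => W p) :=
    fun p => continuous_apply p
  have hWY : ∀ b : A, Continuous (fun W : A × A → ℝ => ∑ a, W (a, b)) :=
    fun b => continuous_finset_sum _ fun a _ => continuous_apply _
  have t1 : Continuous (fun W : A × A → ℝ => ∑ p : A × A, W p * Real.log (W p)) :=
    continuous_finset_sum _ fun p _ => Real.continuous_mul_log.comp (hev p)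
  have t2 : Continuous (fun W : A × A → ℝ => ∑ p : A × A, W p * Real.log (P p.1)) :=
    continuous_finset_sum _ fun p _ => (hev p).mul continuous_const
  have t3 : Continuous (fun W : A × A → ℝ =>
      ∑ b, (∑ a, W (a, b)) * Real.log (∑ a, W (a, b))) :=
    continuous_finset_sum _ fun b _ => Real.continuous_mul_log.comp (hWY b)
  have t4 : Continuous (fun W : A × A → ℝ => ∑ b, (∑ a, W (a, b)) * Real.log (P b)) :=
    continuous_finset_sum _ fun b _ => (hWY b).mul continuous_const
  exact ((t1.sub t2).sub t3).add t4

lemma isCompact_S (P : A → ℝ) : IsCompact {W : A × A → ℝ |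
    (∀ p, 0 ≤ W p) ∧ (∑ p, W p) = 1 ∧ ∀ a, (∑ b, W (a, b)) = P a} := by
  refine IsCompact.of_isClosed_subset
    (isCompact_univ_pi (fun _ : A × A => isCompact_Icc (a := (0:ℝ)) (b := 1))) ?_ ?_
  · have : {W : A × A → ℝ | (∀ p, 0 ≤ W p) ∧ (∑ p, W p) = 1 ∧ ∀ a, (∑ b, W (a, b)) = P a}
        = (⋂ p : A × A, {W : A × A → ℝ | 0 ≤ W p}) ∩
          ({W : A × A → ℝ | (∑ p, W p) = 1} ∩
            ⋂ a : A, {W : A × A → ℝ | (∑ b, W (a, b)) = P a}) := by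
      ext W; simp [Set.mem_iInter, forall_and]
    rw [this]
    refine IsClosed.inter (isClosed_iInter fun p =>
      isClosed_le continuous_const (continuous_apply p)) (IsClosed.inter ?_ ?_)
    · exact isClosed_eq (continuous_finset_sum _ fun p _ => continuous_apply p)
        continuous_const
    · exact isClosed_iInter fun a => isClosed_eq
        (continuous_finset_sum _ fun b _ => continuous_apply _) continuous_const
  · rintro W ⟨hW0, hWs, -⟩
    intro p _
    refine ⟨hW0 p, ?_⟩
    calc W p ≤ ∑ p' : A × A, W p' :=
          Finset.single_le_sum (fun p' _ => hW0 p') (Finset.mem_univ p)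
      _ = 1 := hWs

lemma obj_lb (hP : ∀ a, 0 < P a) (hP1 : ∑ a, P a = 1) {W : A × A → ℝ}
    (hW0 : ∀ p, 0 ≤ W p) (hWs : (∑ p, W p) = 1)
    (hmarg : ∀ a, (∑ b, W (a, b)) = P a) :
    -(Fintype.card (A × A) : ℝ) + (∑ y, Real.log (P y)) ≤ obj P W := by
  have hP1' : ∀ a, P a ≤ 1 := fun a => hP1 ▸
    Finset.single_le_sum (fun a' _ => (hP a').le) (Finset.mem_univ a)
  have hWle1 : ∀ p, W p ≤ 1 := fun p => hWs ▸
    Finset.single_le_sum (fun p' _ => hW0 p') (Finset.mem_univ p)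
  have hWY0 : ∀ b, 0 ≤ ∑ a, W (a, b) := fun b => Finset.sum_nonneg fun a _ => hW0 _
  have hWY1 : ∀ b, (∑ a, W (a, b)) ≤ 1 := by
    intro b
    calc (∑ a, W (a, b)) ≤ ∑ b', ∑ a, W (a, b') :=
        Finset.single_le_sum (f := fun b' => ∑ a, W (a, b'))
          (fun b' _ => hWY0 b') (Finset.mem_univ b)
      _ = ∑ p : A × A, W p := (Fintype.sum_prod_type_right _).symm
      _ = 1 := hWs
  have term1 : ∀ p : A × A,
      -1 ≤ W p * Real.log (W p / ((∑ y, W (p.1, y)) * (∑ x, W (x, p.2)))) := by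
    intro p
    rcases eq_or_lt_of_le (hW0 p) with h0 | h0
    · rw [← h0]; norm_num
    · have hWX : (∑ y, W (p.1, y)) = P p.1 := hmarg p.1
      have hWYpos : 0 < ∑ a, W (a, p.2) :=
        lt_of_lt_of_le h0 (Finset.single_le_sum (f := fun a => W (a, p.2))
          (fun a _ => hW0 _) (Finset.mem_univ p.1))
      have hcpos : 0 < (∑ y, W (p.1, y)) * (∑ x, W (x, p.2)) := by
        rw [hWX]; exact mul_pos (hP p.1) hWYpos
      have hcle : (∑ y, W (p.1, y)) * (∑ x, W (x, p.2)) ≤ 1 := by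
        rw [hWX]
        exact mul_le_one₀ (hP1' p.1) (hWY0 p.2) (hWY1 p.2)
      have hlog : Real.log (W p) ≤ Real.log (W p / ((∑ y, W (p.1, y)) * (∑ x, W (x, p.2)))) := by
        rw [Real.log_div h0.ne' hcpos.ne']
        have := Real.log_nonpos hcpos.le hcle
        linarith
      have hlb : 1 - 1 / W p ≤ Real.log (W p) := by
        have h := Real.log_le_sub_one_of_pos (x := 1 / W p) (by positivity)
        rw [one_div, Real.log_inv] at h
        have : 1 / W p = (W p)⁻¹ := one_div _
        linarith [h]
      calc (-1:ℝ) ≤ W p - 1 := by linarith [h0.le]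
        _ = W p * (1 - 1 / W p) := by field_simp
        _ ≤ W p * Real.log (W p) := mul_le_mul_of_nonneg_left hlb h0.le
        _ ≤ W p * Real.log (W p / ((∑ y, W (p.1, y)) * (∑ x, W (x, p.2)))) :=
            mul_le_mul_of_nonneg_left hlog h0.le
  have term2 : ∀ y, Real.log (P y) ≤ (∑ x, W (x, y)) * Real.log (P y) := by
    intro y
    have hlogy : Real.log (P y) ≤ 0 := Real.log_nonpos (hP y).le (hP1' y)
    calc Real.log (P y) = 1 * Real.log (P y) := (one_mul _).symm
      _ ≤ (∑ x, W (x, y)) * Real.log (P y) :=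
          mul_le_mul_of_nonpos_right (hWY1 y) hlogy
  rw [obj]
  have b1 : -(Fintype.card (A × A) : ℝ)
      ≤ ∑ p : A × A, W p * Real.log (W p / ((∑ y, W (p.1, y)) * (∑ x, W (x, p.2)))) := by
    calc -(Fintype.card (A × A) : ℝ) = ∑ _p : A × A, (-1 : ℝ) := by
          rw [Finset.sum_const, Finset.card_univ, nsmul_eq_mul]; ring
      _ ≤ _ := Finset.sum_le_sum fun p _ => term1 p
  have b2 : (∑ y, Real.log (P y)) ≤ ∑ y, (∑ x, W (x, y)) * Real.log (P y) :=
    Finset.sum_le_sum fun y _ => term2 y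
  linarith

lemma massRate_le (hP : ∀ a, 0 < P a) (hP1 : ∑ a, P a = 1) {W : A × A → ℝ}
    (hW : Feasible P ρ D W) : massRate P ρ P D ≤ obj P W := by
  refine csInf_le ⟨-(Fintype.card (A × A) : ℝ) + (∑ y, Real.log (P y)), ?_⟩
    (Set.mem_image_of_mem _ hW)
  rintro v ⟨W', hW', rfl⟩
  exact obj_lb hP hP1 hW'.1 hW'.2.1 hW'.2.2.1

/-- the approximate-feasibility continuity lemma -/
lemma cont_lemma (hP : ∀ a, 0 < P a) (hP1 : ∑ a, P a = 1) {ε : ℝ} (hε : 0 < ε) :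
    ∃ δ : ℝ, 0 < δ ∧ ∀ W : A × A → ℝ, (∀ p, 0 ≤ W p) → (∑ p, W p) = 1 →
      (∀ a, (∑ b, W (a, b)) = P a) → (∑ p : A × A, W p * ρ p.1 p.2) ≤ D + δ →
      massRate P ρ P D ≤ obj P W + ε := by
  by_contra hcon
  push_neg at hcon
  have hch : ∀ k : ℕ, ∃ W : A × A → ℝ, ((∀ p, 0 ≤ W p) ∧ (∑ p, W p) = 1 ∧
      (∀ a, (∑ b, W (a, b)) = P a)) ∧ (∑ p : A × A, W p * ρ p.1 p.2) ≤ D + 1/(k+1) ∧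
      obj P W + ε < massRate P ρ P D := by
    intro k
    obtain ⟨W, h1, h2, h3, h4, h5⟩ := hcon (1/(k+1)) (by positivity)
    exact ⟨W, ⟨h1, h2, h3⟩, h4, h5⟩
  choose Ws hS hdist hgt using hch
  obtain ⟨Wlim, hWlimS, σ, hσ, hconv⟩ := (isCompact_S P).tendsto_subseq hS
  obtain ⟨hl0, hls, hlmarg⟩ := hWlimS
  -- the expected distortion is continuous
  have hEcont : Continuous (fun W : A × A → ℝ => ∑ p : A × A, W p * ρ p.1 p.2) :=
    continuous_finset_sum _ fun p _ => (continuous_apply p).mul continuous_const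
  have hElim : Filter.Tendsto (fun k => ∑ p : A × A, Ws (σ k) p * ρ p.1 p.2)
      Filter.atTop (nhds (∑ p : A × A, Wlim p * ρ p.1 p.2)) :=
    (hEcont.tendsto Wlim).comp hconv
  have hEle : (∑ p : A × A, Wlim p * ρ p.1 p.2) ≤ D := by
    have hb : Filter.Tendsto (fun k : ℕ => D + 1/((σ k : ℝ)+1)) Filter.atTop (nhds D) := by
      have h0 : Filter.Tendsto (fun k : ℕ => 1/((σ k : ℝ)+1)) Filter.atTop (nhds 0) :=
        tendsto_one_div_add_atTop_nhds_zero_nat.comp hσ.tendsto_atTop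
      simpa using (tendsto_const_nhds (x := D)).add h0
    exact le_of_tendsto_of_tendsto' hElim hb fun k => hdist (σ k)
  have hfeas : Feasible P ρ D Wlim := ⟨hl0, hls, hlmarg, hEle⟩
  have hmr : massRate P ρ P D ≤ obj P Wlim := massRate_le hP hP1 hfeas
  -- limit of objectives
  have hobj_eq : ∀ k, obj P (Ws (σ k)) = Gfun P (Ws (σ k)) :=
    fun k => obj_eq_Gfun hP (hS (σ k)).1 (hS (σ k)).2.2
  have hGlim : Filter.Tendsto (fun k => Gfun P (Ws (σ k))) Filter.atTop
      (nhds (Gfun P Wlim)) := (continuous_Gfun.tendsto Wlim).comp hconv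
  have hle : Gfun P Wlim ≤ massRate P ρ P D - ε := by
    refine le_of_tendsto hGlim (Filter.Eventually.of_forall fun k => ?_)
    have := hgt (σ k)
    rw [hobj_eq k] at this
    linarith
  rw [← obj_eq_Gfun hP hl0 hlmarg] at hle
  linarith
end Cont

/-- Corollary 3(ii), converse measure concentration: if the `D`-blowups of the sets
`C_n` have `Pⁿ`-probability tending to 1, then
`liminf (1/n) log Pⁿ(C_n) ≥ R_C(D) = R(D; P, P)`. -/
theorem stmt_10 {A : Type*} [Fintype A] (P : A → ℝ) (hP : ∀ a, 0 < P a)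
    (hP1 : ∑ a, P a = 1) (ρ : A → A → ℝ) (hρ : ∀ a b, 0 ≤ ρ a b)
    (D : ℝ) (hD : 0 ≤ D) (C : (n : ℕ) → Finset (Fin n → A))
    (hblow : Filter.Tendsto (fun n : ℕ => ∑ x : Fin n → A,
        if ∃ y ∈ C n, (1 / (n : ℝ)) * ∑ i, ρ (x i) (y i) ≤ D then ∏ i, P (x i) else 0)
      Filter.atTop (nhds 1)) :
    massRate P ρ P D ≤
      Filter.liminf (fun n : ℕ => (1 / (n : ℝ)) * Real.log (∑ x ∈ C n, ∏ i, P (x i)))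
        Filter.atTop := by
  classical
  have hA : Nonempty A := by
    by_contra h
    rw [not_nonempty_iff] at h
    rw [Finset.univ_eq_empty, Finset.sum_empty] at hP1
    exact one_ne_zero hP1.symm
  set R : ℝ := ∑ p : A × A, ρ p.1 p.2 with hR
  have hR0 : 0 ≤ R := Finset.sum_nonneg fun p _ => hρ _ _
  have hρle : ∀ a b, ρ a b ≤ R := fun a b =>
    Finset.single_le_sum (f := fun p : A × A => ρ p.1 p.2) (fun p _ => hρ _ _)
      (Finset.mem_univ (a, b))
  set u : ℕ → ℝ := fun n => (1 / (n : ℝ)) * Real.log (∑ x ∈ C n, ∏ i, P (x i)) with hu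
  have hub : ∀ n, u n ≤ 0 := by
    intro n
    have hsum0 : 0 ≤ ∑ x ∈ C n, ∏ i, P (x i) :=
      Finset.sum_nonneg fun x _ => Finset.prod_nonneg fun i _ => (hP _).le
    have hsum1 : (∑ x ∈ C n, ∏ i, P (x i)) ≤ 1 := by
      calc (∑ x ∈ C n, ∏ i, P (x i)) ≤ ∑ x : Fin n → A, ∏ i, P (x i) :=
            Finset.sum_le_sum_of_subset_of_nonneg (Finset.subset_univ _)
              (fun x _ _ => Finset.prod_nonneg fun i _ => (hP _).le)
        _ = 1 := sum_Pn hP1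
    have hlog : Real.log (∑ x ∈ C n, ∏ i, P (x i)) ≤ 0 := Real.log_nonpos hsum0 hsum1
    have := mul_le_mul_of_nonneg_left hlog (by positivity : (0:ℝ) ≤ 1 / (n:ℝ))
    simpa [hu] using this
  have hcob : Filter.IsCoboundedUnder (· ≥ ·) Filter.atTop u :=
    Filter.isCoboundedUnder_ge_of_eventually_le Filter.atTop (Filter.Eventually.of_forall hub)
  refine le_of_forall_pos_le_add ?_
  intro ε hε
  obtain ⟨δ, hδ, hcont⟩ := cont_lemma (ρ := ρ) (D := D) hP hP1 hε
  set θ : ℝ := max (1 - δ / (R + 1)) (1/2) with hθ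
  have hθ1 : θ < 1 := by
    apply max_lt _ (by norm_num)
    have : 0 < δ / (R + 1) := by positivity
    linarith
  have hev1 : ∀ᶠ n in Filter.atTop, θ < ∑ x : Fin n → A,
      (if ∃ y ∈ C n, (1 / (n : ℝ)) * ∑ i, ρ (x i) (y i) ≤ D then ∏ i, P (x i) else 0) :=
    hblow.eventually (eventually_gt_nhds hθ1)
  have hev : ∀ᶠ n in Filter.atTop, massRate P ρ P D - ε ≤ u n := by
    filter_upwards [hev1, Filter.eventually_ge_atTop 1] with n hs hn1
    have hn : 0 < n := hn1
    have hncast : (0:ℝ) < (n:ℝ) := by exact_mod_cast hn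
    set Q : (Fin n → A) → Prop :=
      fun x => ∃ y ∈ C n, (1 / (n : ℝ)) * ∑ i, ρ (x i) (y i) ≤ D with hQ
    have hsth : θ < ∑ x : Fin n → A, (if Q x then Pn P x else 0) := hs
    have hCne : (C n).Nonempty := by
      by_contra hemp
      rw [Finset.not_nonempty_iff_eq_empty] at hemp
      have hz : ∑ x : Fin n → A, (if Q x then Pn P x else 0) = 0 := by
        refine Finset.sum_eq_zero fun x _ => ?_
        have : ¬ Q x := by simp [hQ, hemp]
        simp [this]
      rw [hz] at hsth
      have : (1:ℝ)/2 ≤ θ := le_max_right _ _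
      linarith
    set φ : (Fin n → A) → (Fin n → A) :=
      fun x => if h : Q x then h.choose else hCne.choose with hφdef
    have hφC : ∀ x, φ x ∈ C n := by
      intro x
      simp only [hφdef]
      by_cases h : Q x
      · rw [dif_pos h]; exact h.choose_spec.1
      · rw [dif_neg h]; exact hCne.choose_spec
    have hφD : ∀ x, Q x → (1 / (n:ℝ)) * ∑ i, ρ (x i) (φ x i) ≤ D := by
      intro x h
      simp only [hφdef]
      rw [dif_pos h]
      exact h.choose_spec.2
    -- the blow-up probability
    set s : ℝ := ∑ x : Fin n → A, (if Q x then Pn P x else 0) with hsdef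
    have hs1 : s ≤ 1 := by
      rw [hsdef]
      calc ∑ x : Fin n → A, (if Q x then Pn P x else 0)
          ≤ ∑ x : Fin n → A, Pn P x := Finset.sum_le_sum fun x _ => by
            by_cases h : Q x
            · simp [h]
            · simp [h, Pn_nonneg hP x]
        _ = 1 := sum_Pn hP1
    have hsθ : θ < s := hsth
    -- distortion bound
    have hdistb : ∑ p : A × A, Wbar n P φ p * ρ p.1 p.2 ≤ D + δ := by
      rw [sum_Wbar_mul (fun p => ρ p.1 p.2)]
      have hpt : ∀ x : Fin n → A, Pn P x * ∑ i, ρ (x i) (φ x i)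
          ≤ Pn P x * (if Q x then (n:ℝ) * D else (n:ℝ) * R) := by
        intro x
        apply mul_le_mul_of_nonneg_left _ (Pn_nonneg hP x)
        by_cases h : Q x
        · rw [if_pos h]
          have h2 := hφD x h
          calc ∑ i, ρ (x i) (φ x i) = (n:ℝ) * ((1/(n:ℝ)) * ∑ i, ρ (x i) (φ x i)) := by
                field_simp
            _ ≤ (n:ℝ) * D := mul_le_mul_of_nonneg_left h2 hncast.le
        · rw [if_neg h]
          calc ∑ i, ρ (x i) (φ x i) ≤ ∑ _i : Fin n, R :=
                Finset.sum_le_sum fun i _ => hρle _ _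
            _ = (n:ℝ) * R := by
                rw [Finset.sum_const, Finset.card_univ, Fintype.card_fin, nsmul_eq_mul]
      have hsplit : ∑ x : Fin n → A, Pn P x * (if Q x then (n:ℝ) * D else (n:ℝ) * R)
          = s * ((n:ℝ) * D) + (1 - s) * ((n:ℝ) * R) := by
        have e1 : ∀ x : Fin n → A, Pn P x * (if Q x then (n:ℝ) * D else (n:ℝ) * R)
            = (if Q x then Pn P x else 0) * ((n:ℝ) * D)
              + (if Q x then 0 else Pn P x) * ((n:ℝ) * R) := by
          intro x; by_cases h : Q x <;> simp [h]
        rw [Finset.sum_congr rfl fun x _ => e1 x, Finset.sum_add_distrib,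
          ← Finset.sum_mul, ← Finset.sum_mul, ← hsdef]
        congr 2
        have : ∑ x : Fin n → A, ((if Q x then (0:ℝ) else Pn P x))
            = (∑ x : Fin n → A, Pn P x) - s := by
          rw [hsdef, ← Finset.sum_sub_distrib]
          refine Finset.sum_congr rfl fun x _ => ?_
          by_cases h : Q x <;> simp [h]
        rw [this, sum_Pn hP1]
      calc (1 / (n:ℝ)) * ∑ x : Fin n → A, Pn P x * ∑ i, ρ (x i) (φ x i)
          ≤ (1 / (n:ℝ)) * ∑ x : Fin n → A, Pn P x * (if Q x then (n:ℝ) * D else (n:ℝ) * R) := by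
            apply mul_le_mul_of_nonneg_left (Finset.sum_le_sum fun x _ => hpt x) (by positivity)
        _ = s * D + (1 - s) * R := by
            rw [hsplit]
            field_simp
        _ ≤ D + δ := by
            have hθge : 1 - δ / (R + 1) ≤ θ := le_max_left _ _
            have h1s : 1 - s < δ / (R + 1) := by linarith
            have h1s0 : 0 ≤ 1 - s := by linarith
            have hsD : s * D ≤ D := by nlinarith
            have hRd : (1 - s) * R ≤ δ := by
              have hfrac : (1 - s) * R ≤ δ / (R + 1) * R := by nlinarith
              have : δ / (R + 1) * R ≤ δ := by
                rw [div_mul_eq_mul_div, div_le_iff₀ (by linarith)]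
                nlinarith
              linarith
            linarith
    have h1 : massRate P ρ P D ≤ obj P (Wbar n P φ) + ε :=
      hcont _ (fun p => Wbar_nonneg hP p) (Wbar_sum hP hP1 hn)
        (fun a => Wbar_margX hP hP1 hn a) hdistb
    have h2 : obj P (Wbar n P φ) ≤ u n := core hA hP hP1 hn (C n) hφC
    linarith
  have := Filter.le_liminf_of_le hcob hev
  have hliminf : Filter.liminf u Filter.atTop
      = Filter.liminf (fun n : ℕ => (1 / (n : ℝ)) * Real.log (∑ x ∈ C n, ∏ i, P (x i)))
        Filter.atTop := rfl
  linarith [hliminf ▸ this]
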